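/- Let n ≥ 2 be an integer, ν > 0, and let X₁, …, X_n be real-valued random variables on a probability space such that for every i and every t ≥ 0, P(X_i ≥ t) ≤ 2·exp(−(1/2)·min(t²/ν², t/ν)). Then for every t ≥ 0, P(max_{1 ≤ i ≤ n} X_i ≥ t) ≤ 2·exp(−(1/(3·log n))·min(t²/(2ν²), t/(2ν))). -/

import Mathlib

open MeasureTheory

/-- If each `X_i` satisfies the sub-exponential tail bound
`P(X_i ≥ t) ≤ 2·exp(−(1/2)·min(t²/ν², t/ν))`, then the maximum satisfies
`P(max_i X_i ≥ t) ≤ 2·exp(−(1/(3 log n))·min(t²/(2ν²), t/(2ν)))`. -/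
theorem maximum_of_subexponential_tail_bound
    (n : ℕ) (hn : 2 ≤ n) (ν : ℝ) (hν : 0 < ν)
    (Ω : Type*) [MeasurableSpace Ω] (μ : Measure Ω) [IsProbabilityMeasure μ]
    (X : Fin n → Ω → ℝ)
    (htail : ∀ i, ∀ t : ℝ, 0 ≤ t →
      μ {ω | t ≤ X i ω}
        ≤ ENNReal.ofReal (2 * Real.exp (-(1/2) * min (t ^ 2 / ν ^ 2) (t / ν)))) :
    ∀ t : ℝ, 0 ≤ t →
      μ {ω | t ≤ ⨆ i, X i ω}
        ≤ ENNReal.ofReal (2 * Real.exp (-(1 / (3 * Real.log n)) *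
            min (t ^ 2 / (2 * ν ^ 2)) (t / (2 * ν)))) := by
  intro t ht
  have hn0 : (0:ℝ) < n := by positivity
  set L : ℝ := Real.log n with hLdef
  have hlog2 : (0.6931471803 : ℝ) < Real.log 2 := Real.log_two_gt_d9
  have hL2 : Real.log 2 ≤ L := by
    apply Real.log_le_log (by norm_num)
    exact_mod_cast hn
  have hLpos : 0 < L := lt_of_lt_of_le (by linarith) hL2
  set M : ℝ := min (t ^ 2 / ν ^ 2) (t / ν) with hMdef
  have hM0 : 0 ≤ M := le_min (by positivity) (by positivity)
  -- rewrite the RHS exponent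
  have hmin : min (t ^ 2 / (2 * ν ^ 2)) (t / (2 * ν)) = M / 2 := by
    have e1 : t ^ 2 / (2 * ν ^ 2) = (t ^ 2 / ν ^ 2) / 2 := by ring
    have e2 : t / (2 * ν) = (t / ν) / 2 := by ring
    rw [hMdef, e1, e2, min_div_div_right (by norm_num : (0:ℝ) ≤ 2)]
  have hexp : -(1 / (3 * L)) * min (t ^ 2 / (2 * ν ^ 2)) (t / (2 * ν)) = -(M / (6 * L)) := by
    rw [hmin]
    field_simp
    ring_nf
  rw [hexp]
  by_cases hcase : M ≤ 6 * L * Real.log 2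
  · -- trivial bound: RHS ≥ 1
    have hMle : M / (6 * L) ≤ Real.log 2 := by
      rw [div_le_iff₀ (by positivity)]; linarith
    have h1 : (1:ℝ) ≤ 2 * Real.exp (-(M / (6 * L))) := by
      have h2 := Real.exp_le_exp.mpr (neg_le_neg hMle)
      rw [Real.exp_neg, Real.exp_log (by norm_num : (0:ℝ) < 2)] at h2
      nlinarith [Real.exp_pos (-(M / (6 * L)))]
    calc μ {ω | t ≤ ⨆ i, X i ω} ≤ 1 := prob_le_one
      _ ≤ ENNReal.ofReal (2 * Real.exp (-(M / (6 * L)))) := by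
          rw [← ENNReal.ofReal_one]; exact ENNReal.ofReal_le_ofReal h1
  · push_neg at hcase
    -- union bound
    have hsub : {ω | t ≤ ⨆ i, X i ω} ⊆ ⋃ i, {ω | t ≤ X i ω} := by
      intro ω hω
      have hne : Nonempty (Fin n) := ⟨⟨0, by omega⟩⟩
      obtain ⟨j, hj⟩ := Finite.exists_max (fun i => X i ω)
      have hle : (⨆ i, X i ω) ≤ X j ω := ciSup_le hj
      exact Set.mem_iUnion.mpr ⟨j, le_trans hω hle⟩
    have hunion : μ {ω | t ≤ ⨆ i, X i ω} ≤ ∑ i : Fin n, μ {ω | t ≤ X i ω} :=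
      le_trans (measure_mono hsub) (measure_iUnion_fintype_le μ _)
    have hsum : ∑ i : Fin n, μ {ω | t ≤ X i ω}
        ≤ ENNReal.ofReal (n * (2 * Real.exp (-(1/2) * M))) := by
      have h1 : ∑ i : Fin n, μ {ω | t ≤ X i ω}
          ≤ ∑ _i : Fin n, ENNReal.ofReal (2 * Real.exp (-(1/2) * M)) :=
        Finset.sum_le_sum fun i _ => htail i t ht
      have h2 : ∑ _i : Fin n, ENNReal.ofReal (2 * Real.exp (-(1/2) * M))
          = ENNReal.ofReal (n * (2 * Real.exp (-(1/2) * M))) := by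
        rw [Finset.sum_const, Finset.card_univ, Fintype.card_fin, nsmul_eq_mul,
          ENNReal.ofReal_mul (by positivity : (0:ℝ) ≤ (n:ℝ)), ENNReal.ofReal_natCast]
      rw [← h2]; exact h1
    refine le_trans (le_trans hunion hsum) (ENNReal.ofReal_le_ofReal ?_)
    -- real inequality: n * 2 exp(-M/2) ≤ 2 exp(-M/(6L))
    have hkey : L ≤ M / 2 - M / (6 * L) := by
      have h1 : Real.log 2 * (3 * L - 1) ≥ L := by nlinarith
      have h2 : M * (3 * L - 1) ≥ 6 * L * L := by nlinarith
      rw [div_sub_div _ _ (by norm_num : (2:ℝ) ≠ 0) (by positivity), le_div_iff₀ (by positivity)]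
      nlinarith
    have hnexp : (n : ℝ) ≤ Real.exp (M / 2 - M / (6 * L)) := by
      calc (n : ℝ) = Real.exp L := (Real.exp_log hn0).symm
        _ ≤ _ := Real.exp_le_exp.mpr hkey
    have hprod : Real.exp (M / 2 - M / (6 * L)) * Real.exp (-(1/2) * M)
        = Real.exp (-(M / (6 * L))) := by
      rw [← Real.exp_add]; congr 1; ring
    calc (n : ℝ) * (2 * Real.exp (-(1/2) * M))
        ≤ Real.exp (M / 2 - M / (6 * L)) * (2 * Real.exp (-(1/2) * M)) :=
          mul_le_mul_of_nonneg_right hnexp (by positivity)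
      _ = 2 * (Real.exp (M / 2 - M / (6 * L)) * Real.exp (-(1/2) * M)) := by ring
      _ = 2 * Real.exp (-(M / (6 * L))) := by rw [hprod]
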